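/- For every shape parameter λ < 0 and every x > 0, the Mills ratio of the skew normal distribution satisfies the lower bound (1 - F_λ(x)) / f_λ(x) > x^{-1} (1 + x^{-2})^{-1} · (1 - (λ²/(1+λ²)) · (1 + 1/(λ² x²))). -/

import Mathlib

open Real MeasureTheory Filter Topology Set

/-- Standard normal density. -/
noncomputable def stdPhi (x : ℝ) : ℝ := (Real.sqrt (2 * Real.pi))⁻¹ * Real.exp (-(x ^ 2) / 2)

/-- Standard normal cdf. -/
noncomputable def stdCdf (x : ℝ) : ℝ := ∫ t in Set.Iic x, stdPhi t

lemma stdPhi_pos (x : ℝ) : 0 < stdPhi x := by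
  have h : 0 < Real.sqrt (2 * Real.pi) := Real.sqrt_pos.2 (by positivity)
  unfold stdPhi; positivity

lemma stdPhi_even (x : ℝ) : stdPhi (-x) = stdPhi x := by simp [stdPhi]

lemma continuous_stdPhi : Continuous stdPhi := by unfold stdPhi; fun_prop

lemma stdPhi_eq (x : ℝ) :
    stdPhi x = (Real.sqrt (2 * Real.pi))⁻¹ * Real.exp (-(1/2) * x ^ 2) := by
  rw [stdPhi]; ring_nf

lemma integrable_stdPhi : Integrable stdPhi := by
  have h := (integrable_exp_neg_mul_sq (b := (1:ℝ)/2) (by norm_num)).const_mul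
    (Real.sqrt (2 * Real.pi))⁻¹
  exact h.congr (by filter_upwards with x using (stdPhi_eq x).symm)

lemma integral_stdPhi : ∫ x, stdPhi x = 1 := by
  simp_rw [stdPhi_eq]
  rw [integral_const_mul]
  have : ∫ x : ℝ, Real.exp (-(1/2) * x ^ 2) = Real.sqrt (π / (1/2)) := integral_gaussian (1/2)
  rw [this]
  have h2 : π / (1/2 : ℝ) = 2 * π := by ring
  rw [h2, inv_mul_cancel₀]
  exact ne_of_gt (Real.sqrt_pos.2 (by positivity))

section
variable {f : ℝ → ℝ}

lemma cdf_hasDerivAt (hc : Continuous f) (hi : Integrable f) (x : ℝ) :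
    HasDerivAt (fun y => ∫ t in Iic y, f t) (f x) x := by
  have key : ∀ y : ℝ, ∫ t in Iic y, f t = (∫ t in Iic 0, f t) + ∫ t in (0:ℝ)..y, f t := by
    intro y
    rw [← intervalIntegral.integral_Iic_sub_Iic hi.integrableOn hi.integrableOn]
    ring
  have hd : HasDerivAt (fun y => (∫ t in Iic 0, f t) + ∫ t in (0:ℝ)..y, f t) (f x) x := by
    refine HasDerivAt.const_add _ ?_
    exact intervalIntegral.integral_hasDerivAt_right hi.intervalIntegrable
      (hc.stronglyMeasurableAtFilter _ _) hc.continuousAt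
  exact hd.congr_of_eventuallyEq (by filter_upwards with y using key y)

lemma cdf_tendsto (hi : Integrable f) :
    Tendsto (fun y => ∫ t in Iic y, f t) atTop (𝓝 (∫ t, f t)) := by
  have h : AECover (volume : Measure ℝ) atTop (fun y => Iic y) := aecover_Iic tendsto_id
  exact h.integral_tendsto_of_countably_generated hi

end

lemma hasDerivAt_stdCdf (x : ℝ) : HasDerivAt stdCdf (stdPhi x) x :=
  cdf_hasDerivAt continuous_stdPhi integrable_stdPhi x

lemma continuous_stdCdf : Continuous stdCdf := by
  have : ∀ x, HasDerivAt stdCdf (stdPhi x) x := hasDerivAt_stdCdf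
  exact continuous_iff_continuousAt.2 fun x => (this x).continuousAt

lemma stdCdf_pos (x : ℝ) : 0 < stdCdf x := by
  rw [stdCdf, setIntegral_pos_iff_support_of_nonneg_ae
    (Eventually.of_forall fun t => (stdPhi_pos t).le) integrable_stdPhi.integrableOn]
  have hs : Function.support stdPhi = univ := by
    ext t; simp [Function.mem_support, ne_of_gt (stdPhi_pos t)]
  rw [hs, univ_inter, Real.volume_Iic]
  simp

lemma stdCdf_nonneg (x : ℝ) : 0 ≤ stdCdf x := (stdCdf_pos x).le

lemma stdCdf_le_one (x : ℝ) : stdCdf x ≤ 1 := by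
  rw [stdCdf, ← integral_stdPhi]
  exact setIntegral_le_integral integrable_stdPhi
    (Eventually.of_forall fun t => (stdPhi_pos t).le)

lemma stdCdf_add_neg (x : ℝ) : stdCdf x + stdCdf (-x) = 1 := by
  have h1 : stdCdf (-x) = ∫ t in Ioi x, stdPhi t := by
    rw [stdCdf, ← integral_comp_neg_Ioi]
    simp_rw [stdPhi_even]
  rw [stdCdf, h1, ← integral_stdPhi]
  exact intervalIntegral.integral_Iic_add_Ioi integrable_stdPhi.integrableOn
    integrable_stdPhi.integrableOn

lemma tendsto_stdCdf_atTop : Tendsto stdCdf atTop (𝓝 1) := by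
  have := cdf_tendsto integrable_stdPhi
  rwa [integral_stdPhi] at this

lemma tendsto_stdPhi_atTop : Tendsto stdPhi atTop (𝓝 0) := by
  have h1 : Tendsto (fun x : ℝ => -(x ^ 2) / 2) atTop atBot := by
    apply Tendsto.atBot_div_const (by norm_num : (0:ℝ) < 2)
    exact tendsto_neg_atTop_atBot.comp (tendsto_pow_atTop (by norm_num : 2 ≠ 0))
  have h2 : Tendsto (fun x : ℝ => Real.exp (-(x ^ 2) / 2)) atTop (𝓝 0) :=
    Real.tendsto_exp_atBot.comp h1
  have h3 := h2.const_mul (Real.sqrt (2 * Real.pi))⁻¹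
  rw [mul_zero] at h3
  exact h3.congr fun x => rfl

lemma tendsto_stdCdf_neg_atTop : Tendsto (fun t => stdCdf (-t)) atTop (𝓝 0) := by
  have h : ∀ t : ℝ, stdCdf (-t) = 1 - stdCdf t := fun t => by
    have := stdCdf_add_neg t; linarith
  simp_rw [h]
  have := tendsto_stdCdf_atTop.const_sub 1
  simpa using this

lemma hasDerivAt_stdPhi (x : ℝ) : HasDerivAt stdPhi (-x * stdPhi x) x := by
  have h : HasDerivAt (fun x : ℝ => -(x ^ 2) / 2) (-x) x := by
    have := ((hasDerivAt_pow 2 x).neg).div_const 2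
    simpa using this.congr_deriv (by push_cast; ring)
  have h2 := (h.exp).const_mul (Real.sqrt (2 * Real.pi))⁻¹
  have : HasDerivAt stdPhi ((Real.sqrt (2 * Real.pi))⁻¹ * (Real.exp (-(x ^ 2) / 2) * -x)) x := h2
  convert this using 1
  rw [stdPhi]; ring

lemma pos_of_deriv_neg_tendsto {f f' : ℝ → ℝ} {a : ℝ}
    (hd : ∀ x, a ≤ x → HasDerivAt f (f' x) x)
    (hneg : ∀ x, a ≤ x → f' x < 0)
    (hlim : Tendsto f atTop (𝓝 0)) : 0 < f a := by
  have hanti : StrictAntiOn f (Ici a) := by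
    apply strictAntiOn_of_deriv_neg (convex_Ici a)
    · exact fun x hx => (hd x hx).continuousAt.continuousWithinAt
    · intro x hx
      rw [interior_Ici] at hx
      rw [(hd x (le_of_lt hx)).deriv]
      exact hneg x (le_of_lt hx)
  have h1 : f (a + 1) < f a := hanti (le_refl a) (by simp : a + 1 ∈ Ici a) (by linarith)
  have h2 : (0 : ℝ) ≤ f (a + 1) := by
    refine le_of_tendsto hlim ?_
    filter_upwards [eventually_ge_atTop (a + 1)] with y hy
    exact hanti.antitoneOn (by simp : a + 1 ∈ Ici a)
      (by simp only [mem_Ici]; linarith : y ∈ Ici a) hy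
  linarith

lemma mills_lb {y : ℝ} (hy : 0 < y) : y * stdPhi y / (1 + y ^ 2) < stdCdf (-y) := by
  set h : ℝ → ℝ := fun t => stdCdf (-t) - t * stdPhi t / (1 + t ^ 2) with hh
  set h' : ℝ → ℝ := fun t => -(2 * stdPhi t / (1 + t ^ 2) ^ 2) with hh'
  have hden : ∀ t : ℝ, (1 + t ^ 2) ≠ 0 := fun t => by positivity
  have hd : ∀ t : ℝ, HasDerivAt h (h' t) t := by
    intro t
    have d1 : HasDerivAt (fun t : ℝ => stdCdf (-t)) (-stdPhi t) t := by
      have := (hasDerivAt_stdCdf (-t)).comp t (hasDerivAt_neg t)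
      exact this.congr_deriv (by simp [stdPhi_even])
    have d2 : HasDerivAt (fun t : ℝ => t * stdPhi t / (1 + t ^ 2))
        (((1 * stdPhi t + t * (-t * stdPhi t)) * (1 + t ^ 2) - t * stdPhi t * (0 + 2 * t))
          / (1 + t ^ 2) ^ 2) t := by
      exact ((hasDerivAt_id t).mul (hasDerivAt_stdPhi t)).div
        ((hasDerivAt_const t 1).add (by simpa using hasDerivAt_pow 2 t)) (hden t)
    have := d1.sub d2
    refine this.congr_deriv ?_
    rw [hh']
    field_simp
    ring
  have hlim : Tendsto h atTop (𝓝 0) := by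
    have l2 : Tendsto (fun t : ℝ => t * stdPhi t / (1 + t ^ 2)) atTop (𝓝 0) := by
      apply squeeze_zero' (g := stdPhi)
      · filter_upwards [eventually_ge_atTop (0:ℝ)] with t ht
        have := (stdPhi_pos t).le
        positivity
      · filter_upwards [eventually_ge_atTop (0:ℝ)] with t ht
        rw [div_le_iff₀ (by positivity)]
        nlinarith [stdPhi_pos t, sq_nonneg (t - 1), sq_nonneg t]
      · exact tendsto_stdPhi_atTop
    have := tendsto_stdCdf_neg_atTop.sub l2
    simpa using this
  have := pos_of_deriv_neg_tendsto (a := y) (fun t _ => hd t)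
    (fun t _ => by
      have := stdPhi_pos t
      have : (0:ℝ) < 2 * stdPhi t / (1 + t ^ 2) ^ 2 := by positivity
      simp only [hh']; linarith)
    hlim
  simp only [hh] at this
  linarith

/-- Skew normal density with shape parameter l. -/
noncomputable def snPdf (l x : ℝ) : ℝ := 2 * stdPhi x * stdCdf (l * x)

/-- Skew normal cdf with shape parameter l. -/
noncomputable def snCdf (l x : ℝ) : ℝ := ∫ t in Set.Iic x, snPdf l t

/-- Gumbel extreme value distribution function. -/
noncomputable def gumbel (x : ℝ) : ℝ := Real.exp (-Real.exp (-x))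

lemma snPdf_pos (l x : ℝ) : 0 < snPdf l x := by
  have := stdPhi_pos x; have := stdCdf_pos (l * x); rw [snPdf]; positivity

lemma continuous_snPdf (l : ℝ) : Continuous (snPdf l) := by
  unfold snPdf
  exact ((continuous_const.mul continuous_stdPhi).mul
    (continuous_stdCdf.comp (continuous_const.mul continuous_id)))

lemma integrable_snPdf (l : ℝ) : Integrable (snPdf l) := by
  refine (integrable_stdPhi.const_mul 2).mono ((continuous_snPdf l).aestronglyMeasurable) ?_
  filter_upwards with x
  rw [Real.norm_eq_abs, Real.norm_eq_abs, abs_of_pos (snPdf_pos l x),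
    abs_of_pos (by have := stdPhi_pos x; positivity : (0:ℝ) < 2 * stdPhi x)]
  rw [snPdf]
  have h1 := stdCdf_le_one (l * x)
  have h2 := stdPhi_pos x
  nlinarith

lemma integral_snPdf (l : ℝ) : ∫ x, snPdf l x = 1 := by
  have hneg : ∫ x, snPdf l (-x) = ∫ x, snPdf l x := integral_neg_eq_self (snPdf l) volume
  have hsum : ∀ x : ℝ, snPdf l x + snPdf l (-x) = 2 * stdPhi x := by
    intro x
    have h := stdCdf_add_neg (l * x)
    simp only [snPdf, stdPhi_even, mul_neg, neg_mul]
    nlinarith [stdPhi_pos x]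
  have hint : (∫ x, snPdf l x) + ∫ x, snPdf l (-x) = 2 := by
    rw [← integral_add (integrable_snPdf l) ((integrable_snPdf l).comp_neg)]
    simp_rw [hsum]
    rw [integral_const_mul, integral_stdPhi]; ring
  rw [hneg] at hint; linarith

lemma hasDerivAt_snCdf (l x : ℝ) : HasDerivAt (snCdf l) (snPdf l x) x :=
  cdf_hasDerivAt (continuous_snPdf l) (integrable_snPdf l) x

lemma tendsto_snCdf_atTop (l : ℝ) : Tendsto (snCdf l) atTop (𝓝 1) := by
  have := cdf_tendsto (integrable_snPdf l)
  rwa [integral_snPdf] at this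

lemma tendsto_snPdf_atTop (l : ℝ) : Tendsto (snPdf l) atTop (𝓝 0) := by
  apply squeeze_zero (fun t => (snPdf_pos l t).le)
    (g := fun t => 2 * stdPhi t)
  · intro t
    have h1 := stdCdf_le_one (l * t)
    have h2 := stdPhi_pos t
    rw [snPdf]; nlinarith
  · have := tendsto_stdPhi_atTop.const_mul (2:ℝ)
    simpa using this

lemma hasDerivAt_snPdf (l x : ℝ) :
    HasDerivAt (snPdf l) (-x * snPdf l x + 2 * l * stdPhi x * stdPhi (l * x)) x := by
  have d1 : HasDerivAt (fun x : ℝ => 2 * stdPhi x) (2 * (-x * stdPhi x)) x :=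
    (hasDerivAt_stdPhi x).const_mul 2
  have d2 : HasDerivAt (fun x : ℝ => stdCdf (l * x)) (stdPhi (l * x) * l) x := by
    have hg : HasDerivAt (fun y : ℝ => l * y) l x := by
      simpa using (hasDerivAt_id x).const_mul l
    exact (hasDerivAt_stdCdf (l * x)).comp x hg
  have := d1.mul d2
  have heq : HasDerivAt (snPdf l)
      (2 * (-x * stdPhi x) * stdCdf (l * x) + 2 * stdPhi x * (stdPhi (l * x) * l)) x := this
  convert heq using 1
  rw [snPdf]; ring

noncomputable def gfun (l x : ℝ) : ℝ := (x ^ 2 - 1) / ((1 + l ^ 2) * (x ^ 3 + x))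

noncomputable def gdfun (l x : ℝ) : ℝ :=
  (-x ^ 4 + 4 * x ^ 2 + 1) / ((1 + l ^ 2) * (x ^ 3 + x) ^ 2)

lemma hasDerivAt_gfun (l : ℝ) {x : ℝ} (hx : 0 < x) :
    HasDerivAt (gfun l) (gdfun l x) x := by
  have hden : (1 + l ^ 2) * (x ^ 3 + x) ≠ 0 := by positivity
  have h1 : HasDerivAt (fun x : ℝ => x ^ 2 - 1) (2 * x) x := by
    simpa using (hasDerivAt_pow 2 x).sub_const 1
  have h2 : HasDerivAt (fun x : ℝ => (1 + l ^ 2) * (x ^ 3 + x))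
      ((1 + l ^ 2) * (3 * x ^ 2 + 1)) x := by
    have : HasDerivAt (fun x : ℝ => x ^ 3 + x) (3 * x ^ 2 + 1) x := by
      exact ((hasDerivAt_pow 3 x).add (hasDerivAt_id x)).congr_deriv (by norm_num)
    exact this.const_mul (1 + l ^ 2)
  have := h1.div h2 hden
  refine this.congr_deriv ?_
  rw [gdfun]
  rw [div_eq_div_iff (by positivity) (by positivity)]
  ring

lemma tendsto_gfun_atTop (l : ℝ) : Tendsto (gfun l) atTop (𝓝 0) := by
  apply squeeze_zero' (g := fun t => t⁻¹)
  · filter_upwards [eventually_ge_atTop (1:ℝ)] with t ht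
    rw [gfun]
    have h1 : (0:ℝ) < (1 + l ^ 2) * (t ^ 3 + t) := by positivity
    apply div_nonneg _ h1.le
    nlinarith
  · filter_upwards [eventually_ge_atTop (1:ℝ)] with t ht
    rw [gfun, div_le_iff₀ (by positivity), inv_mul_eq_div,
      le_div_iff₀ (by linarith : (0:ℝ) < t)]
    nlinarith [sq_nonneg l, sq_nonneg t, mul_nonneg (sq_nonneg l) (by positivity : (0:ℝ) ≤ t ^ 3 + t)]
  · exact tendsto_inv_atTop_zero

lemma key_ineq (l : ℝ) (hl : l < 0) (t : ℝ) (ht : 0 < t) :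
    0 < snPdf l t * (1 + gdfun l t - t * gfun l t)
      + 2 * l * gfun l t * stdPhi t * stdPhi (l * t) := by
  have hl2 : (0:ℝ) < 1 + l ^ 2 := by positivity
  have hd : (0:ℝ) < t ^ 3 + t := by positivity
  set A := 1 + gdfun l t - t * gfun l t with hA
  clear_value A
  have hApos : 0 < A := by
    have heq : A = (1 + 6 * t ^ 2 + l ^ 2 * t ^ 2 + t ^ 4 + 2 * l ^ 2 * t ^ 4 + l ^ 2 * t ^ 6)
        / ((1 + l ^ 2) * (t ^ 3 + t) ^ 2) := by
      rw [hA, gfun, gdfun]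
      field_simp
      ring
    rw [heq]; positivity
  have hy : 0 < -l * t := by nlinarith
  have hmills : (-l * t) * stdPhi (l * t) / (1 + (l * t) ^ 2) < stdCdf (l * t) := by
    have h0 := mills_lb hy
    have he : -(-l * t) = l * t := by ring
    have he2 : stdPhi (-l * t) = stdPhi (l * t) := by
      rw [show (-l * t) = -(l * t) by ring, stdPhi_even]
    have he3 : (-l * t) ^ 2 = (l * t) ^ 2 := by ring
    rwa [he, he2, he3] at h0
  have hlt : (0:ℝ) < 1 + (l * t) ^ 2 := by positivity
  have hpoly : gfun l t ≤ t * A / (1 + (l * t) ^ 2) := by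
    have heq2 : t * A / (1 + (l * t) ^ 2) - gfun l t
        = (2 * t + 6 * t ^ 3 + 2 * l ^ 2 * t ^ 3 + 2 * l ^ 2 * t ^ 5)
          / ((1 + (l * t) ^ 2) * ((1 + l ^ 2) * (t ^ 3 + t) ^ 2)) := by
      rw [hA, gfun, gdfun]
      field_simp
      ring
    have h0 : 0 ≤ t * A / (1 + (l * t) ^ 2) - gfun l t := by
      rw [heq2]; positivity
    linarith
  have hP : (0:ℝ) < 2 * stdPhi t := by have := stdPhi_pos t; positivity
  have h1 : 2 * stdPhi t * ((-l * t) * stdPhi (l * t) / (1 + (l * t) ^ 2)) * A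
      < snPdf l t * A := by
    apply mul_lt_mul_of_pos_right _ hApos
    rw [snPdf]
    exact mul_lt_mul_of_pos_left hmills hP
  have h2 : 0 ≤ 2 * stdPhi t * ((-l * t) * stdPhi (l * t) / (1 + (l * t) ^ 2)) * A
      + 2 * l * gfun l t * stdPhi t * stdPhi (l * t) := by
    have heq3 : 2 * stdPhi t * ((-l * t) * stdPhi (l * t) / (1 + (l * t) ^ 2)) * A
        + 2 * l * gfun l t * stdPhi t * stdPhi (l * t)
        = (2 * (-l) * stdPhi t * stdPhi (l * t)) * (t * A / (1 + (l * t) ^ 2) - gfun l t) := by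
      ring
    rw [heq3]
    apply mul_nonneg _ (by linarith)
    have h3 := stdPhi_pos t
    have h4 := stdPhi_pos (l * t)
    nlinarith [mul_pos (mul_pos (neg_pos.2 hl) h3) h4]
  linarith

theorem skew_normal_mills_lower_neg (l : ℝ) (hl : l < 0) (x : ℝ) (hx : 0 < x) :
    x⁻¹ * (1 + (x ^ 2)⁻¹)⁻¹ *
      (1 - (l ^ 2 / (1 + l ^ 2)) * (1 + 1 / (l ^ 2 * x ^ 2)))
      < (1 - snCdf l x) / snPdf l x := by
  have hl0 : l ≠ 0 := ne_of_lt hl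
  have hx0 : x ≠ 0 := ne_of_gt hx
  set D : ℝ → ℝ := fun t => (1 - snCdf l t) - gfun l t * snPdf l t with hD
  set Dd : ℝ → ℝ := fun t => -(snPdf l t * (1 + gdfun l t - t * gfun l t)
      + 2 * l * gfun l t * stdPhi t * stdPhi (l * t)) with hDd
  have hderiv : ∀ t, x ≤ t → HasDerivAt D (Dd t) t := by
    intro t ht
    have ht0 : 0 < t := lt_of_lt_of_le hx ht
    have dA : HasDerivAt (fun t => 1 - snCdf l t) (-(snPdf l t)) t :=
      (hasDerivAt_snCdf l t).const_sub 1
    have dB : HasDerivAt (fun t => gfun l t * snPdf l t)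
        (gdfun l t * snPdf l t + gfun l t
          * (-t * snPdf l t + 2 * l * stdPhi t * stdPhi (l * t))) t :=
      (hasDerivAt_gfun l ht0).mul (hasDerivAt_snPdf l t)
    have := dA.sub dB
    refine this.congr_deriv ?_
    rw [hDd]; ring
  have hneg : ∀ t, x ≤ t → Dd t < 0 := by
    intro t ht
    have := key_ineq l hl t (lt_of_lt_of_le hx ht)
    simp only [hDd]; linarith
  have hlim : Tendsto D atTop (𝓝 0) := by
    have h1 : Tendsto (fun t => 1 - snCdf l t) atTop (𝓝 0) := by
      have := (tendsto_snCdf_atTop l).const_sub 1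
      simpa using this
    have h2 : Tendsto (fun t => gfun l t * snPdf l t) atTop (𝓝 0) := by
      have := (tendsto_gfun_atTop l).mul (tendsto_snPdf_atTop l)
      simpa using this
    have := h1.sub h2
    simpa using this
  have hDx : 0 < D x := pos_of_deriv_neg_tendsto hderiv hneg hlim
  have hlhs : x⁻¹ * (1 + (x ^ 2)⁻¹)⁻¹ *
      (1 - (l ^ 2 / (1 + l ^ 2)) * (1 + 1 / (l ^ 2 * x ^ 2))) = gfun l x := by
    rw [gfun]
    have h1 : (1:ℝ) + l ^ 2 ≠ 0 := by positivity
    field_simp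
    ring
  rw [hlhs, lt_div_iff₀ (snPdf_pos l x)]
  simp only [hD] at hDx
  linarith
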